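/- For any topological space X and infinite cardinal κ, L(X^c_κ) ≤ 2^{L(X)·wt(X)·κ}, where X^c_κ is the G^c_κ-modification of X. -/

import Mathlib

open Cardinal Set TopologicalSpace

universe u

/-- The tightness `t(X)`: the least infinite cardinal `κ` such that whenever
`x ∈ closure A` there is `B ⊆ A` with `#B ≤ κ` and `x ∈ closure B`. -/
noncomputable def tightness (X : Type u) [TopologicalSpace X] : Cardinal.{u} :=
  sInf {κ : Cardinal.{u} | ℵ₀ ≤ κ ∧ ∀ (A : Set X) (x : X), x ∈ closure A →
    ∃ B ⊆ A, #B ≤ κ ∧ x ∈ closure B}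

/-- The `κ`-closure of a set `A`. -/
noncomputable def clk {X : Type u} [TopologicalSpace X] (κ : Cardinal.{u}) (A : Set X) : Set X :=
  ⋃ (B : Set X) (_ : B ⊆ A ∧ #B ≤ κ), closure B

/-- A cover `𝒞` witnessing that `wt X ≤ κ`. -/
noncomputable def IsWtWitness {X : Type u} [TopologicalSpace X] (κ : Cardinal.{u}) (𝒞 : Set (Set X)) : Prop :=
  ⋃₀ 𝒞 = Set.univ ∧ #𝒞 ≤ 2 ^ κ ∧ ∀ C ∈ 𝒞, tightness ↥C ≤ κ ∧ clk (2 ^ κ) C = Set.univ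

/-- The weak tightness `wt(X)`. -/
noncomputable def wt (X : Type u) [TopologicalSpace X] : Cardinal.{u} :=
  sInf {κ : Cardinal.{u} | ℵ₀ ≤ κ ∧ ∃ 𝒞 : Set (Set X), IsWtWitness κ 𝒞}

/-- The Lindelöf number `L(X)`. -/
noncomputable def LindelofNumber (X : Type u) [TopologicalSpace X] : Cardinal.{u} :=
  sInf {κ : Cardinal.{u} | ℵ₀ ≤ κ ∧ ∀ 𝒰 : Set (Set X), (∀ U ∈ 𝒰, IsOpen U) →
    ⋃₀ 𝒰 = Set.univ → ∃ 𝒱 ⊆ 𝒰, #𝒱 ≤ κ ∧ ⋃₀ 𝒱 = Set.univ}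

/-- The pseudocharacter `ψ(X)`. -/
noncomputable def psi (X : Type u) [TopologicalSpace X] : Cardinal.{u} :=
  sInf {κ : Cardinal.{u} | ℵ₀ ≤ κ ∧ ∀ x : X, ∃ 𝒰 : Set (Set X),
    #𝒰 ≤ κ ∧ (∀ U ∈ 𝒰, IsOpen U ∧ x ∈ U) ∧ ⋂₀ 𝒰 = {x}}

/-- The closed pseudocharacter `ψ_c(X)`. -/
noncomputable def psic (X : Type u) [TopologicalSpace X] : Cardinal.{u} :=
  sInf {κ : Cardinal.{u} | ℵ₀ ≤ κ ∧ ∀ x : X, ∃ 𝒰 : Set (Set X),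
    #𝒰 ≤ κ ∧ (∀ U ∈ 𝒰, IsOpen U ∧ x ∈ U) ∧ (⋂ U ∈ 𝒰, closure U) = {x}}

/-- `A` is `𝒞`-saturated: `A ∩ C` is dense in `A` for every `C ∈ 𝒞`. -/
noncomputable def Saturated {X : Type u} [TopologicalSpace X] (𝒞 : Set (Set X)) (A : Set X) : Prop :=
  ∀ C ∈ 𝒞, A ⊆ closure (A ∩ C)

/-- The π-character `πχ(x, X)` of a point: least cardinality of a local π-base at `x`. -/
noncomputable def piCharPt {X : Type u} [TopologicalSpace X] (x : X) : Cardinal.{u} :=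
  sInf {κ : Cardinal.{u} | ∃ ℬ : Set (Set X), #ℬ ≤ κ ∧
    (∀ B ∈ ℬ, IsOpen B ∧ B.Nonempty) ∧ ∀ U : Set X, IsOpen U → x ∈ U → ∃ B ∈ ℬ, B ⊆ U}

/-- The π-character `πχ(X)`. -/
noncomputable def piChar (X : Type u) [TopologicalSpace X] : Cardinal.{u} :=
  ⨆ x : X, piCharPt x

/-- The character `χ(x, X)` of a point: least cardinality of a local base at `x`. -/
noncomputable def charPt {X : Type u} [TopologicalSpace X] (x : X) : Cardinal.{u} :=
  sInf {κ : Cardinal.{u} | ∃ ℬ : Set (Set X), #ℬ ≤ κ ∧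
    (∀ B ∈ ℬ, IsOpen B ∧ x ∈ B) ∧ ∀ U : Set X, IsOpen U → x ∈ U → ∃ B ∈ ℬ, B ⊆ U}

/-- The character `χ(X)`. -/
noncomputable def character (X : Type u) [TopologicalSpace X] : Cardinal.{u} :=
  ⨆ x : X, charPt x

/-- The density `d(X)`: least cardinality of a dense subset. -/
noncomputable def density (X : Type u) [TopologicalSpace X] : Cardinal.{u} :=
  sInf {κ : Cardinal.{u} | ∃ D : Set X, Dense D ∧ #D ≤ κ}

/-- A space is homogeneous if its homeomorphism group acts transitively. -/
noncomputable def Homogeneous (X : Type u) [TopologicalSpace X] : Prop :=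
  ∀ x y : X, ∃ h : X ≃ₜ X, h x = y

/-- A space is power homogeneous if some (nonempty) power of it is homogeneous. -/
noncomputable def PowerHomogeneous (X : Type u) [TopologicalSpace X] : Prop :=
  ∃ I : Type u, Nonempty I ∧ Homogeneous (I → X)

/-- A `G^c_κ`-set: `G = ⋂𝒰 = ⋂_{U ∈ 𝒰} closure U` for a family `𝒰` of `≤ κ` open sets. -/
noncomputable def GcSet {X : Type u} [TopologicalSpace X] (κ : Cardinal.{u}) (G : Set X) : Prop :=
  ∃ 𝒰 : Set (Set X), #𝒰 ≤ κ ∧ (∀ U ∈ 𝒰, IsOpen U) ∧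
    G = ⋂₀ 𝒰 ∧ G = ⋂ U ∈ 𝒰, closure U

/-- A subset is subseparable if it is contained in the closure of a countable set. -/
noncomputable def Subseparable {X : Type u} [TopologicalSpace X] (A : Set X) : Prop :=
  ∃ c : Set X, c.Countable ∧ A ⊆ closure c

section AuxST
variable {X : Type u} [TopologicalSpace X]

private lemma aux_tightness_mem (Y : Type u) [TopologicalSpace Y] :
    tightness Y ∈ {κ : Cardinal.{u} | ℵ₀ ≤ κ ∧ ∀ (A : Set Y) (x : Y), x ∈ closure A →
      ∃ B ⊆ A, #B ≤ κ ∧ x ∈ closure B} := by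
  apply csInf_mem
  refine ⟨max #Y ℵ₀, le_max_right _ _, fun A x hx => ⟨A, Subset.rfl, ?_, hx⟩⟩
  exact le_max_of_le_left (mk_set_le A)

private lemma aux_tightness_spec (Y : Type u) [TopologicalSpace Y] (A : Set Y) (x : Y)
    (hx : x ∈ closure A) : ∃ B ⊆ A, #B ≤ tightness Y ∧ x ∈ closure B :=
  (aux_tightness_mem Y).2 A x hx

private lemma aux_L_mem :
    LindelofNumber X ∈ {κ : Cardinal.{u} | ℵ₀ ≤ κ ∧ ∀ 𝒰 : Set (Set X), (∀ U ∈ 𝒰, IsOpen U) →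
      ⋃₀ 𝒰 = Set.univ → ∃ 𝒱 ⊆ 𝒰, #𝒱 ≤ κ ∧ ⋃₀ 𝒱 = Set.univ} := by
  apply csInf_mem
  refine ⟨max #X ℵ₀, le_max_right _ _, fun 𝒰 _ hcov => ?_⟩
  have hx : ∀ x : X, ∃ U, U ∈ 𝒰 ∧ x ∈ U := by
    intro x
    have : x ∈ ⋃₀ 𝒰 := hcov ▸ mem_univ x
    simpa [mem_sUnion] using this
  choose Ux hUx1 hUx2 using hx
  refine ⟨range Ux, range_subset_iff.2 hUx1, le_max_of_le_left mk_range_le, ?_⟩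
  rw [eq_univ_iff_forall]
  exact fun x => ⟨Ux x, mem_range_self x, hUx2 x⟩

private lemma aux_L_infinite : ℵ₀ ≤ LindelofNumber X := aux_L_mem.1

private lemma aux_L_spec (𝒰 : Set (Set X)) (h1 : ∀ U ∈ 𝒰, IsOpen U) (h2 : ⋃₀ 𝒰 = Set.univ) :
    ∃ 𝒱 ⊆ 𝒰, #𝒱 ≤ LindelofNumber X ∧ ⋃₀ 𝒱 = Set.univ := aux_L_mem.2 𝒰 h1 h2

private lemma aux_wt_mem :
    wt X ∈ {κ : Cardinal.{u} | ℵ₀ ≤ κ ∧ ∃ 𝒞 : Set (Set X), IsWtWitness κ 𝒞} := by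
  apply csInf_mem
  refine ⟨max #X ℵ₀, le_max_right _ _, {Set.univ}, ?_, ?_, ?_⟩
  · simp
  · have : #({Set.univ} : Set (Set X)) = 1 := mk_singleton _
    rw [this]
    calc (1 : Cardinal.{u}) = 2 ^ (0 : Cardinal.{u}) := (power_zero 2).symm
      _ ≤ 2 ^ max #X ℵ₀ := power_le_power_left two_ne_zero zero_le
  · rintro C (rfl : C = Set.univ)
    constructor
    · apply csInf_le'
      refine ⟨le_max_right _ _, fun A x hx => ⟨A, Subset.rfl, ?_, hx⟩⟩
      calc #A ≤ #(↥(Set.univ : Set X)) := mk_set_le A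
        _ = #X := mk_univ
        _ ≤ max #X ℵ₀ := le_max_left _ _
    · rw [eq_univ_iff_forall]
      intro x
      rw [clk, mem_iUnion]
      refine ⟨{x}, ?_⟩
      rw [mem_iUnion]
      refine ⟨⟨subset_univ _, ?_⟩, subset_closure rfl⟩
      rw [mk_singleton]
      calc (1 : Cardinal.{u}) = 2 ^ (0 : Cardinal.{u}) := (power_zero 2).symm
        _ ≤ 2 ^ max #X ℵ₀ := power_le_power_left two_ne_zero zero_le

private lemma aux_wt_infinite : ℵ₀ ≤ wt X := aux_wt_mem.1

private lemma aux_wt_spec : ∃ 𝒞 : Set (Set X), IsWtWitness (wt X) 𝒞 := aux_wt_mem.2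

private lemma aux_lindelof_closed {F : Set X} (hF : IsClosed F) {𝒪 : Set (Set X)}
    (h1 : ∀ U ∈ 𝒪, IsOpen U) (h2 : F ⊆ ⋃₀ 𝒪) :
    ∃ 𝒱 ⊆ 𝒪, #𝒱 ≤ LindelofNumber X ∧ F ⊆ ⋃₀ 𝒱 := by
  have hop : ∀ U ∈ 𝒪 ∪ {Fᶜ}, IsOpen U := by
    rintro U (hU | hU)
    · exact h1 U hU
    · rw [mem_singleton_iff] at hU; subst hU; exact hF.isOpen_compl
  have hcov : ⋃₀ (𝒪 ∪ {Fᶜ}) = Set.univ := by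
    rw [eq_univ_iff_forall]
    intro x
    by_cases hx : x ∈ F
    · obtain ⟨U, hU1, hU2⟩ := h2 hx
      exact ⟨U, Or.inl hU1, hU2⟩
    · exact ⟨Fᶜ, Or.inr rfl, hx⟩
  obtain ⟨𝒱, h𝒱1, h𝒱2, h𝒱3⟩ := aux_L_spec (𝒪 ∪ {Fᶜ}) hop hcov
  · refine ⟨𝒱 \ {Fᶜ}, ?_, ?_, ?_⟩
    · intro V hV
      rcases h𝒱1 hV.1 with h | h
      · exact h
      · exact absurd h hV.2
    · exact (mk_le_mk_of_subset (diff_subset)).trans h𝒱2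
    · intro x hx
      have : x ∈ ⋃₀ 𝒱 := h𝒱3 ▸ mem_univ x
      obtain ⟨V, hV1, hV2⟩ := this
      refine ⟨V, ⟨hV1, ?_⟩, hV2⟩
      intro hVc
      rw [mem_singleton_iff] at hVc
      subst hVc
      exact hV2 hx

private lemma aux_closure_capture {𝒞 : Set (Set X)} (h𝒞 : ⋃₀ 𝒞 = Set.univ) {c : Cardinal.{u}}
    (ht : ∀ C ∈ 𝒞, tightness ↥C ≤ c) {A : Set X} (hsat : Saturated 𝒞 A) {x : X}
    (hx : x ∈ closure A) : ∃ B ⊆ A, #B ≤ c ∧ x ∈ closure B := by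
  have : x ∈ ⋃₀ 𝒞 := h𝒞 ▸ mem_univ x
  obtain ⟨C₀, hC₀, hxC₀⟩ := this
  have h1 : closure A ⊆ closure (A ∩ C₀) := by
    calc closure A ⊆ closure (closure (A ∩ C₀)) := closure_mono (hsat C₀ hC₀)
      _ = closure (A ∩ C₀) := closure_closure
  have hx2 : x ∈ closure (A ∩ C₀) := h1 hx
  set s : Set ↥C₀ := (Subtype.val) ⁻¹' (A ∩ C₀) with hs
  have himg : (Subtype.val : ↥C₀ → X) '' s = A ∩ C₀ := by
    rw [hs, Subtype.image_preimage_coe]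
    exact inter_eq_right.2 inter_subset_right
  have hx3 : (⟨x, hxC₀⟩ : ↥C₀) ∈ closure s := by
    rw [closure_subtype, himg]
    exact hx2
  obtain ⟨B', hB'1, hB'2, hB'3⟩ := aux_tightness_spec ↥C₀ s ⟨x, hxC₀⟩ hx3
  refine ⟨Subtype.val '' B', ?_, ?_, ?_⟩
  · intro y hy
    obtain ⟨y', hy', rfl⟩ := hy
    exact (himg ▸ mem_image_of_mem _ (hB'1 hy') : (y' : X) ∈ A ∩ C₀).1
  · exact mk_image_le.trans (hB'2.trans (ht C₀ hC₀))
  · rw [closure_subtype] at hB'3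
    exact hB'3


private lemma aux_mk_iUnion_le {α ι : Type u} {f : ι → Set α} {a : Cardinal.{u}}
    (ha : ℵ₀ ≤ a) (h1 : #ι ≤ a) (h2 : ∀ i, #(f i) ≤ a) : #(⋃ i, f i) ≤ a := by
  rcases isEmpty_or_nonempty ι with h | h
  · simp
  · calc #(⋃ i, f i) ≤ #ι * ⨆ i, #(f i) := mk_iUnion_le f
      _ ≤ a * a := mul_le_mul' h1 (ciSup_le' h2)
      _ = a := mul_eq_self ha

private lemma aux_mk_biUnion_le {α ι : Type u} {s : Set ι} {f : ι → Set α} {a : Cardinal.{u}}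
    (ha : ℵ₀ ≤ a) (h1 : #s ≤ a) (h2 : ∀ i ∈ s, #(f i) ≤ a) : #(⋃ i ∈ s, f i) ≤ a := by
  rw [Set.biUnion_eq_iUnion]
  exact aux_mk_iUnion_le ha h1 fun i => h2 i i.2

private lemma aux_mem_closure_inter {s O : Set X} {x : X} (hO : IsOpen O) (hxO : x ∈ O)
    (hx : x ∈ closure s) : x ∈ closure (s ∩ O) := by
  rw [mem_closure_iff] at hx ⊢
  intro o ho hxo
  obtain ⟨y, hy⟩ := hx (o ∩ O) (ho.inter hO) ⟨hxo, hxO⟩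
  exact ⟨y, hy.1.1, hy.2, hy.1.2⟩

private lemma aux_count_small {α : Type u} {T : Set α} {c k : Cardinal.{u}}
    (hc : ℵ₀ ≤ c) (hT : #T ≤ 2 ^ c) (hk : k ≤ c) :
    #{S : Set α | S ⊆ T ∧ #S ≤ k} ≤ 2 ^ c := by
  calc #{S : Set α | S ⊆ T ∧ #S ≤ k} = #{S : Set α // S ⊆ T ∧ #S ≤ k} := rfl
    _ ≤ max #T ℵ₀ ^ k := mk_bounded_subset_le T k
    _ ≤ (2 ^ c) ^ k := power_le_power_right (max_le hT (hc.trans (cantor c).le))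
    _ ≤ (2 ^ c) ^ c := power_le_power_left (power_ne_zero c two_ne_zero) hk
    _ = 2 ^ (c * c) := (power_mul).symm
    _ = 2 ^ c := by rw [mul_eq_self hc]

private lemma aux_gc_univ {κ : Cardinal.{u}} : GcSet κ (Set.univ : Set X) := by
  refine ⟨∅, by simp, by simp, by simp, by simp⟩

private lemma aux_gc_inter {κ : Cardinal.{u}} (hκ : ℵ₀ ≤ κ) {G₁ G₂ : Set X}
    (h1 : GcSet κ G₁) (h2 : GcSet κ G₂) : GcSet κ (G₁ ∩ G₂) := by
  obtain ⟨𝒰₁, h𝒰₁1, h𝒰₁2, h𝒰₁3, h𝒰₁4⟩ := h1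
  obtain ⟨𝒰₂, h𝒰₂1, h𝒰₂2, h𝒰₂3, h𝒰₂4⟩ := h2
  refine ⟨𝒰₁ ∪ 𝒰₂, ?_, ?_, ?_, ?_⟩
  · calc #(𝒰₁ ∪ 𝒰₂ : Set (Set X)) ≤ #𝒰₁ + #𝒰₂ := mk_union_le _ _
      _ ≤ κ + κ := add_le_add h𝒰₁1 h𝒰₂1
      _ = κ := add_eq_self hκ
  · rintro U (hU | hU)
    · exact h𝒰₁2 U hU
    · exact h𝒰₂2 U hU
  · rw [sInter_union, ← h𝒰₁3, ← h𝒰₂3]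
  · rw [biInter_union, ← h𝒰₁4, ← h𝒰₂4]

/-- The key "trace" lemma: if `𝒢` is a cover of `X` by `G^c_κ`-sets (with chosen witnessing
families `𝒰 G`), then the closure of any set `B` is covered by at most `2^lam` members of `𝒢`,
where `κ ≤ lam` and `#B ≤ lam`. -/
private lemma aux_star {κ : Cardinal.{u}} {𝒢 : Set (Set X)} {𝒰 : Set X → Set (Set X)}
    (hcov : ⋃₀ 𝒢 = Set.univ)
    (hU1 : ∀ G, G ∈ 𝒢 → #(𝒰 G) ≤ κ)
    (hU2 : ∀ G, G ∈ 𝒢 → ∀ U ∈ 𝒰 G, IsOpen U)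
    (hU3 : ∀ G, G ∈ 𝒢 → G = ⋂₀ 𝒰 G)
    (hU4 : ∀ G, G ∈ 𝒢 → G = ⋂ U ∈ 𝒰 G, closure U)
    {lam : Cardinal.{u}} (hκlam : κ ≤ lam) (hlam : ℵ₀ ≤ lam)
    (B : Set X) (hB : #B ≤ lam) :
    ∃ ℛ ⊆ 𝒢, #ℛ ≤ 2 ^ lam ∧ closure B ⊆ ⋃₀ ℛ := by
  rcases isEmpty_or_nonempty X with hX | hX
  · refine ⟨∅, empty_subset _, by simp, ?_⟩
    intro x _
    exact (IsEmpty.false x).elim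
  have hcov' : ∀ x : X, ∃ G, G ∈ 𝒢 ∧ x ∈ G := by
    intro x
    have : x ∈ ⋃₀ 𝒢 := hcov ▸ mem_univ x
    simpa [mem_sUnion] using this
  choose cov hcov1 hcov2 using hcov'
  set tr : X → Set (Set X) := fun x => (fun U => U ∩ B) '' 𝒰 (cov x) with htr
  have hex : ∀ t ∈ tr '' closure B, ∃ x, x ∈ closure B ∧ tr x = t := by
    intro t ht
    obtain ⟨x, hx, rfl⟩ := ht
    exact ⟨x, hx, rfl⟩
  choose! f hf1 hf2 using hex
  refine ⟨(fun t => cov (f t)) '' (tr '' closure B), ?_, ?_, ?_⟩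
  · rintro G ⟨t, _, rfl⟩
    exact hcov1 _
  · calc #((fun t => cov (f t)) '' (tr '' closure B)) ≤ #(tr '' closure B) := mk_image_le
      _ ≤ #{t : Set (Set X) | t ⊆ 𝒫 B ∧ #t ≤ κ} := by
          apply mk_le_mk_of_subset
          rintro t ⟨x, _, rfl⟩
          constructor
          · rintro S ⟨U, _, rfl⟩
            exact inter_subset_right
          · exact mk_image_le.trans (hU1 _ (hcov1 x))
      _ ≤ 2 ^ lam := by
          apply aux_count_small hlam ?_ hκlam
          rw [mk_powerset]
          exact power_le_power_left two_ne_zero hB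
  · intro y hy
    have hty : tr y ∈ tr '' closure B := mem_image_of_mem tr hy
    set x := f (tr y) with hx
    have hx1 : x ∈ closure B := hf1 _ hty
    have hx2 : tr x = tr y := hf2 _ hty
    refine ⟨cov x, ⟨tr y, hty, rfl⟩, ?_⟩
    rw [hU4 (cov x) (hcov1 x)]
    rw [mem_iInter₂]
    intro U hU
    have htx : U ∩ B ∈ tr x := ⟨U, hU, rfl⟩
    rw [hx2] at htx
    obtain ⟨U', hU', hUB⟩ := htx
    have hyU' : y ∈ U' := by
      have : y ∈ ⋂₀ 𝒰 (cov y) := (hU3 (cov y) (hcov1 y)) ▸ hcov2 y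
      exact this U' hU'
    have : y ∈ closure (B ∩ U') := aux_mem_closure_inter (hU2 (cov y) (hcov1 y) U' hU') hyU' hy
    rw [inter_comm] at this
    have hUB' : U' ∩ B = U ∩ B := hUB
    rw [hUB'] at this
    exact closure_mono inter_subset_left this

/-- The main engine: every cover of `X` by `G^c_κ`-sets has a subcover of size at most
`2 ^ (L(X)·wt(X)·κ)`. -/
private lemma aux_engine (κ : Cardinal.{u}) (hκ : ℵ₀ ≤ κ) (𝒢 : Set (Set X))
    (hGc : ∀ G ∈ 𝒢, GcSet κ G) (hcov : ⋃₀ 𝒢 = Set.univ) :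
    ∃ 𝒢' ⊆ 𝒢, #𝒢' ≤ 2 ^ (LindelofNumber X * wt X * κ) ∧ ⋃₀ 𝒢' = Set.univ := by
  set lam := LindelofNumber X * wt X * κ with hlamdef
  set c := (2 : Cardinal.{u}) ^ lam with hcdef
  have hL0 : LindelofNumber X ≠ 0 := (aleph0_pos.trans_le aux_L_infinite).ne'
  have hwt0 : wt X ≠ 0 := (aleph0_pos.trans_le aux_wt_infinite).ne'
  have hκ0 : κ ≠ 0 := (aleph0_pos.trans_le hκ).ne'
  have hLlam : LindelofNumber X ≤ lam := by
    rw [hlamdef, mul_assoc]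
    exact le_mul_right (mul_ne_zero hwt0 hκ0)
  have hwtlam : wt X ≤ lam := by
    rw [hlamdef]
    exact (le_mul_left hL0).trans (le_mul_right hκ0)
  have hκlam : κ ≤ lam := by
    rw [hlamdef]
    exact le_mul_left (mul_ne_zero hL0 hwt0)
  have hlam : ℵ₀ ≤ lam := hκ.trans hκlam
  have hclam : lam ≤ c := (cantor lam).le
  have hc : ℵ₀ ≤ c := hlam.trans hclam
  rcases isEmpty_or_nonempty X with hX | hX
  · refine ⟨∅, empty_subset _, by simp, ?_⟩
    rw [sUnion_empty]
    exact (univ_eq_empty_iff.2 hX).symm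
  -- wt witness
  obtain ⟨𝒞, h𝒞cov, h𝒞card, h𝒞props⟩ := aux_wt_spec (X := X)
  have htight : ∀ C ∈ 𝒞, tightness ↥C ≤ lam := fun C hC => (h𝒞props C hC).1.trans hwtlam
  have h2wtc : (2 : Cardinal.{u}) ^ wt X ≤ c := by
    rw [hcdef]; exact power_le_power_left two_ne_zero hwtlam
  -- clk witnesses
  have hBex : ∀ (x : X) (C : Set X), C ∈ 𝒞 →
      ∃ B : Set X, (B ⊆ C ∧ #B ≤ 2 ^ wt X) ∧ x ∈ closure B := by
    intro x C hC
    have h := (h𝒞props C hC).2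
    have hx : x ∈ clk (2 ^ wt X) C := h ▸ mem_univ x
    rw [clk, mem_iUnion] at hx
    obtain ⟨B, hB⟩ := hx
    rw [mem_iUnion] at hB
    obtain ⟨hB1, hB2⟩ := hB
    exact ⟨B, hB1, hB2⟩
  choose! Bfun hBfun1 hBfun2 using hBex
  -- Gc data
  choose! 𝒰 hU1 hU2 hU3 hU4 using hGc
  -- covering choice
  have hcov' : ∀ x : X, ∃ G, G ∈ 𝒢 ∧ x ∈ G := by
    intro x
    have : x ∈ ⋃₀ 𝒢 := hcov ▸ mem_univ x
    simpa [mem_sUnion] using this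
  choose cov hcov1 hcov2 using hcov'
  -- star families
  have hstar' : ∀ B : Set X, #B ≤ lam →
      ∃ ℛ : Set (Set X), ℛ ⊆ 𝒢 ∧ #ℛ ≤ c ∧ closure B ⊆ ⋃₀ ℛ := by
    intro B hB
    obtain ⟨ℛ, h1, h2, h3⟩ := aux_star hcov hU1 hU2 hU3 hU4 hκlam hlam B hB
    exact ⟨ℛ, h1, h2, h3⟩
  choose! ℛ hR1 hR2 hR3 using hstar'
  -- witness points
  have hwex : ∀ 𝒱 : Set (Set X), ((⋃ U ∈ 𝒱, closure U)ᶜ).Nonempty →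
      ∃ z, z ∈ (⋃ U ∈ 𝒱, closure U)ᶜ := fun 𝒱 h => h
  choose! w hw using hwex
  -- operators
  set GF : Set X → Set (Set X) :=
    fun A => {G | ∃ B : Set X, (B ⊆ A ∧ #B ≤ lam) ∧ G ∈ ℛ B} with hGFdef
  set pool : Set X → Set (Set X) := fun A => {U | ∃ G ∈ GF A, U ∈ 𝒰 G} with hpooldef
  set wits : Set X → Set X := fun A => {z | ∃ 𝒱 : Set (Set X),
    (𝒱 ⊆ pool A ∧ #𝒱 ≤ lam ∧ ((⋃ U ∈ 𝒱, closure U)ᶜ).Nonempty) ∧ z = w 𝒱} with hwitsdef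
  set hstep : Set X → Set X := fun S => S ∪ ⋃ x ∈ S, ⋃ C ∈ 𝒞, Bfun x C with hstepdef
  set hull : Set X → Set X := fun S => ⋃ n : ULift.{u} ℕ, hstep^[n.down] S with hulldef
  set Φ : Set X → Set X := fun A => hull (A ∪ wits A) with hΦdef
  -- hull facts
  have hull_sub : ∀ S : Set X, S ⊆ hull S := by
    intro S x hx
    exact mem_iUnion.2 ⟨⟨0⟩, hx⟩
  have hull_sat : ∀ S : Set X, Saturated 𝒞 (hull S) := by
    intro S C hC x hx
    obtain ⟨n, hn⟩ := mem_iUnion.1 hx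
    have hsub : Bfun x C ⊆ hull S ∩ C := by
      intro y hy
      refine ⟨mem_iUnion.2 ⟨⟨n.down + 1⟩, ?_⟩, (hBfun1 x C hC).1 hy⟩
      rw [Function.iterate_succ_apply']
      exact Or.inr (mem_biUnion hn (mem_biUnion hC hy))
    exact closure_mono hsub (hBfun2 x C hC)
  have hstep_card : ∀ S : Set X, #S ≤ c → #(hstep S) ≤ c := by
    intro S hS
    apply (mk_union_le _ _).trans
    have h2 : #(⋃ x ∈ S, ⋃ C ∈ 𝒞, Bfun x C) ≤ c := by
      apply aux_mk_biUnion_le hc hS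
      intro x _
      apply aux_mk_biUnion_le hc (h𝒞card.trans h2wtc)
      intro C hC
      exact (hBfun1 x C hC).2.trans h2wtc
    calc #S + #(⋃ x ∈ S, ⋃ C ∈ 𝒞, Bfun x C) ≤ c + c := add_le_add hS h2
      _ = c := add_eq_self hc
  have hull_card : ∀ S : Set X, #S ≤ c → #(hull S) ≤ c := by
    intro S hS
    show #(⋃ n : ULift.{u} ℕ, hstep^[n.down] S) ≤ c
    apply aux_mk_iUnion_le hc (mk_le_aleph0.trans hc)
    rintro ⟨n⟩
    induction n with
    | zero => simpa using hS
    | succ n ih =>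
        rw [Function.iterate_succ_apply']
        exact hstep_card _ ih
  -- GF facts
  have hGF_sub : ∀ A : Set X, GF A ⊆ 𝒢 := by
    rintro A G ⟨B, hB, hGB⟩
    exact hR1 B hB.2 hGB
  have hGF_card : ∀ A : Set X, #A ≤ c → #(GF A) ≤ c := by
    intro A hA
    have hsub : GF A ⊆ ⋃ B : {B : Set X // B ⊆ A ∧ #B ≤ lam}, ℛ B.1 := by
      rintro G ⟨B, hB, hGB⟩
      exact mem_iUnion.2 ⟨⟨B, hB⟩, hGB⟩
    apply (mk_le_mk_of_subset hsub).trans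
    apply aux_mk_iUnion_le hc
    · exact aux_count_small hlam hA le_rfl
    · intro B
      exact hR2 B.1 B.2.2
  have hpool_card : ∀ A : Set X, #A ≤ c → #(pool A) ≤ c := by
    intro A hA
    have hsub : pool A ⊆ ⋃ G : {G : Set X // G ∈ GF A}, 𝒰 G.1 := by
      rintro U ⟨G, hG, hU⟩
      exact mem_iUnion.2 ⟨⟨G, hG⟩, hU⟩
    apply (mk_le_mk_of_subset hsub).trans
    apply aux_mk_iUnion_le hc (hGF_card A hA)
    intro G
    exact (hU1 G.1 (hGF_sub A G.2)).trans (hκlam.trans hclam)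
  have hwits_card : ∀ A : Set X, #A ≤ c → #(wits A) ≤ c := by
    intro A hA
    have hsub : wits A ⊆ w '' {𝒱 : Set (Set X) | 𝒱 ⊆ pool A ∧ #𝒱 ≤ lam} := by
      rintro z ⟨𝒱, ⟨h1, h2, _⟩, rfl⟩
      exact mem_image_of_mem w ⟨h1, h2⟩
    apply (mk_le_mk_of_subset hsub).trans
    apply mk_image_le.trans
    exact aux_count_small hlam (hpool_card A hA) le_rfl
  -- Φ facts
  have hΦ_sub : ∀ A : Set X, A ⊆ Φ A := fun A =>
    (subset_union_left).trans (hull_sub _)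
  have hΦ_wits : ∀ A : Set X, wits A ⊆ Φ A := fun A =>
    (subset_union_right).trans (hull_sub _)
  have hΦ_sat : ∀ A : Set X, Saturated 𝒞 (Φ A) := fun A => hull_sat _
  have hΦ_card : ∀ A : Set X, #A ≤ c → #(Φ A) ≤ c := by
    intro A hA
    apply hull_card
    apply (mk_union_le _ _).trans
    calc #A + #(wits A) ≤ c + c := add_le_add hA (hwits_card A hA)
      _ = c := add_eq_self hc
  -- the transfinite iteration
  haveI hwoJ : IsWellOrder ((Order.succ lam).ord).ToType (· < ·) := isWellOrder_lt
  obtain ⟨g, hg⟩ : ∃ g : ((Order.succ lam).ord).ToType → Set X,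
      ∀ j, g j = Φ (⋃ i : {i : ((Order.succ lam).ord).ToType // i < j}, g i.1) :=
    ⟨WellFounded.fix wellFounded_lt
        (fun j IH => Φ (⋃ i : {i : ((Order.succ lam).ord).ToType // i < j}, IH i.1 i.2)),
      fun j => WellFounded.fix_eq _ _ j⟩
  set prev : ((Order.succ lam).ord).ToType → Set X :=
    fun j => ⋃ i : {i : ((Order.succ lam).ord).ToType // i < j}, g i.1 with hprevdef
  have hg' : ∀ j, g j = Φ (prev j) := hg
  have hidx : ∀ j : ((Order.succ lam).ord).ToType,
      #{i : ((Order.succ lam).ord).ToType // i < j} ≤ lam := by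
    intro j
    have h1 : #{i : ((Order.succ lam).ord).ToType // i < j}
        = (Ordinal.typein (· < ·) j).card := (Ordinal.card_typein _).symm
    rw [h1]
    have h2 : Ordinal.typein (· < ·) j < (Order.succ lam).ord := Ordinal.typein_lt_self j
    rw [Cardinal.lt_ord] at h2
    exact Order.lt_succ_iff.1 h2
  have hJcard : #(((Order.succ lam).ord).ToType) ≤ c := by
    rw [Cardinal.mk_toType, Cardinal.card_ord]
    exact Order.succ_le_of_lt (cantor lam)
  have hg_card : ∀ j, #(g j) ≤ c := by
    intro j
    induction j using WellFounded.induction with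
    | hwf => exact wellFounded_lt
    | _ j IH =>
        rw [hg' j]
        exact hΦ_card _ (aux_mk_iUnion_le hc ((hidx j).trans hclam) fun i => IH i.1 i.2)
  set A := ⋃ j, g j with hAdef
  have hA_card : #A ≤ c := aux_mk_iUnion_le hc hJcard hg_card
  have hA_sat : Saturated 𝒞 A := by
    intro C hC x hx
    obtain ⟨j, hj⟩ := mem_iUnion.1 hx
    rw [hg' j] at hj
    have h1 : x ∈ closure (Φ (prev j) ∩ C) := hΦ_sat (prev j) C hC hj
    apply closure_mono (inter_subset_inter ?_ Subset.rfl) h1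
    rw [← hg' j]
    exact subset_iUnion g j
  have hcapture : ∀ B : Set X, B ⊆ A → #B ≤ lam → ∃ j, B ⊆ prev j := by
    intro B hBA hBcard
    have hchoice : ∀ b : ↥B, ∃ j, (b : X) ∈ g j := fun b => mem_iUnion.1 (hBA b.2)
    choose jb hjb using hchoice
    have hbound : Set.Bounded (· < ·) (range jb) := by
      by_contra hnb
      have hcof : IsCofinal (range jb) := by
        intro a
        by_contra h
        push_neg at h
        exact hnb ⟨a, h⟩
      have h1 := Order.cof_le hcof
      rw [Ordinal.cof_toType, (isRegular_succ hlam).cof_eq] at h1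
      exact absurd (h1.trans (mk_range_le.trans hBcard)) (not_le.2 (Order.lt_succ lam))
    obtain ⟨j₀, hj₀⟩ := hbound
    refine ⟨j₀, fun b hb => ?_⟩
    exact mem_iUnion.2 ⟨⟨jb ⟨b, hb⟩, hj₀ _ (mem_range_self _)⟩, hjb ⟨b, hb⟩⟩
  have hwits_in : ∀ (j) (𝒱 : Set (Set X)), 𝒱 ⊆ pool (prev j) → #𝒱 ≤ lam →
      ((⋃ U ∈ 𝒱, closure U)ᶜ).Nonempty → w 𝒱 ∈ g j := by
    intro j 𝒱 h1 h2 h3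
    rw [hg' j]
    exact hΦ_wits _ ⟨𝒱, ⟨h1, h2, h3⟩, rfl⟩
  -- conclusion
  refine ⟨GF A, hGF_sub A, hGF_card A hA_card, ?_⟩
  rw [eq_univ_iff_forall]
  by_contra hq'
  push_neg at hq'
  obtain ⟨q, hq⟩ := hq'
  -- the selection
  have hsel : ∀ G, G ∈ GF A → ∃ U, U ∈ 𝒰 G ∧ q ∉ closure U := by
    intro G hG
    have hG𝒢 : G ∈ 𝒢 := hGF_sub A hG
    have hqG : q ∉ G := fun h => hq ⟨G, hG, h⟩
    rw [hU4 G hG𝒢] at hqG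
    simpa [mem_iInter₂] using hqG
  choose! sG hsG1 hsG2 using hsel
  -- closure of A is covered
  have hclA : closure A ⊆ ⋃₀ GF A := by
    intro x hx
    obtain ⟨B, hB1, hB2, hB3⟩ := aux_closure_capture h𝒞cov htight hA_sat hx
    obtain ⟨G, hG, hxG⟩ := hR3 B hB2 hB3
    exact ⟨G, ⟨B, ⟨hB1, hB2⟩, hG⟩, hxG⟩
  -- Lindelöf application
  set 𝒮 := sG '' (GF A) with h𝒮def
  have h𝒮open : ∀ U ∈ 𝒮, IsOpen U := by
    rintro U ⟨G, hG, rfl⟩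
    exact hU2 G (hGF_sub A hG) (sG G) (hsG1 G hG)
  have hcl𝒮 : closure A ⊆ ⋃₀ 𝒮 := by
    intro x hx
    obtain ⟨G, hG, hxG⟩ := hclA hx
    refine ⟨sG G, mem_image_of_mem _ hG, ?_⟩
    have hx2 : x ∈ ⋂₀ 𝒰 G := (hU3 G (hGF_sub A hG)) ▸ hxG
    exact hx2 (sG G) (hsG1 G hG)
  obtain ⟨𝒱, h𝒱1, h𝒱2, h𝒱3⟩ := aux_lindelof_closed isClosed_closure h𝒮open hcl𝒮
  have h𝒱lam : #𝒱 ≤ lam := h𝒱2.trans hLlam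
  have h𝒱ex : ∀ V, V ∈ 𝒱 → ∃ G, G ∈ GF A ∧ sG G = V := fun V hV => h𝒱1 hV
  choose! GV hGV1 hGV2 using h𝒱ex
  have hBVex : ∀ V, V ∈ 𝒱 → ∃ B : Set X, (B ⊆ A ∧ #B ≤ lam) ∧ GV V ∈ ℛ B :=
    fun V hV => hGV1 V hV
  choose! BV hBV1 hBV2 using hBVex
  have hB'A : (⋃ V ∈ 𝒱, BV V) ⊆ A := iUnion₂_subset fun V hV => (hBV1 V hV).1
  have hB'card : #(⋃ V ∈ 𝒱, BV V) ≤ lam :=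
    aux_mk_biUnion_le hlam h𝒱lam fun V hV => (hBV1 V hV).2
  obtain ⟨j₀, hj₀⟩ := hcapture _ hB'A hB'card
  have h𝒱pool : 𝒱 ⊆ pool (prev j₀) := by
    intro V hV
    refine ⟨GV V, ⟨BV V, ⟨?_, (hBV1 V hV).2⟩, hBV2 V hV⟩, ?_⟩
    · exact (subset_biUnion_of_mem hV).trans hj₀
    · have h := hsG1 (GV V) (hGV1 V hV)
      rwa [hGV2 V hV] at h
  have hcompl : ((⋃ U ∈ 𝒱, closure U)ᶜ).Nonempty := by
    refine ⟨q, ?_⟩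
    intro hqmem
    rw [mem_iUnion₂] at hqmem
    obtain ⟨V, hV, hqV⟩ := hqmem
    rw [← hGV2 V hV] at hqV
    exact hsG2 (GV V) (hGV1 V hV) hqV
  have hwA : w 𝒱 ∈ A := mem_iUnion.2 ⟨j₀, hwits_in j₀ 𝒱 h𝒱pool h𝒱lam hcompl⟩
  have hwin : w 𝒱 ∈ ⋃ U ∈ 𝒱, closure U := by
    obtain ⟨V, hV, hwV⟩ := h𝒱3 (subset_closure hwA)
    exact mem_biUnion hV (subset_closure hwV)
  exact (hw _ hcompl) hwin

end AuxST

/-- Main Theorem: `L(X^c_κ) ≤ 2^{L(X)·wt(X)·κ}`. -/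
theorem stmt10 {X : Type u} [TopologicalSpace X] (κ : Cardinal.{u}) (hκ : ℵ₀ ≤ κ) :
    @LindelofNumber X (generateFrom {G : Set X | GcSet κ G}) ≤
      2 ^ (LindelofNumber X * wt X * κ) := by
  have hL0 : LindelofNumber X ≠ 0 := (aleph0_pos.trans_le aux_L_infinite).ne'
  have hwt0 : wt X ≠ 0 := (aleph0_pos.trans_le aux_wt_infinite).ne'
  have hκlam : κ ≤ LindelofNumber X * wt X * κ := le_mul_left (mul_ne_zero hL0 hwt0)
  have haleph : ℵ₀ ≤ 2 ^ (LindelofNumber X * wt X * κ) :=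
    (hκ.trans hκlam).trans (cantor _).le
  unfold LindelofNumber
  apply csInf_le'
  refine ⟨haleph, ?_⟩
  intro 𝒰 hop hcovU
  rcases isEmpty_or_nonempty X with hX | hX
  · refine ⟨∅, empty_subset _, by simp, ?_⟩
    rw [sUnion_empty]
    exact (univ_eq_empty_iff.2 hX).symm
  have hbasic : ∀ U : Set X, GenerateOpen {G : Set X | GcSet κ G} U →
      ∀ x ∈ U, ∃ G, GcSet κ G ∧ x ∈ G ∧ G ⊆ U := by
    intro U hU
    induction hU with
    | basic V hV => exact fun x hx => ⟨V, hV, hx, Subset.rfl⟩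
    | univ => exact fun x _ => ⟨Set.univ, aux_gc_univ, mem_univ x, Subset.rfl⟩
    | inter V W hV hW ihV ihW =>
        intro x hx
        obtain ⟨G₁, h1, h2, h3⟩ := ihV x hx.1
        obtain ⟨G₂, h4, h5, h6⟩ := ihW x hx.2
        exact ⟨G₁ ∩ G₂, aux_gc_inter hκ h1 h4, ⟨h2, h5⟩, inter_subset_inter h3 h6⟩
    | sUnion σ hσ ih =>
        intro x hx
        obtain ⟨t, ht, hxt⟩ := hx
        obtain ⟨G, h1, h2, h3⟩ := ih t ht x hxt
        exact ⟨G, h1, h2, h3.trans (subset_sUnion_of_mem ht)⟩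
  have hx' : ∀ x : X, ∃ U, U ∈ 𝒰 ∧ x ∈ U := by
    intro x
    have : x ∈ ⋃₀ 𝒰 := hcovU ▸ mem_univ x
    simpa [mem_sUnion] using this
  choose Ux hUx1 hUx2 using hx'
  have hGex : ∀ x : X, ∃ G, GcSet κ G ∧ x ∈ G ∧ G ⊆ Ux x :=
    fun x => hbasic (Ux x) (hop (Ux x) (hUx1 x)) x (hUx2 x)
  choose Gx hGx1 hGx2 hGx3 using hGex
  obtain ⟨𝒢'', h1, h2, h3⟩ := aux_engine κ hκ (range Gx)
    (by rintro G ⟨x, rfl⟩; exact hGx1 x)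
    (by rw [eq_univ_iff_forall]; exact fun x => ⟨Gx x, mem_range_self x, hGx2 x⟩)
  have hGsel : ∀ G, G ∈ 𝒢'' → ∃ x : X, Gx x = G := fun G hG => h1 hG
  choose! xG hxG using hGsel
  refine ⟨(fun G => Ux (xG G)) '' 𝒢'', ?_, ?_, ?_⟩
  · rintro U ⟨G, hG, rfl⟩
    exact hUx1 (xG G)
  · exact mk_image_le.trans h2
  · rw [eq_univ_iff_forall]
    intro y
    have hy : y ∈ ⋃₀ 𝒢'' := h3 ▸ mem_univ y
    obtain ⟨G, hG, hyG⟩ := hy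
    refine ⟨Ux (xG G), mem_image_of_mem _ hG, ?_⟩
    have hsub := hGx3 (xG G)
    rw [hxG G hG] at hsub
    exact hsub hyG
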